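/- arXiv:2106.00452 — 4 statements merged into one kernel-verified Lean document; each statement's English description precedes it below -/
import Mathlib

section
/- In a connected labeled digraph G over alphabet A, if ≡₁ is a group-preserving equivalence relation on the vertices of G and ≡₂ is an equivalence relation contained in ≡₁, then ≡₂ is also group-preserving. -/
open List

section Prelude

variable {A V : Type*}

structure LDigraph (V A : Type*) where
  E : Set (V × A × V)

namespace LDigraph

inductive Step (G : LDigraph V A) : V → V → FreeGroup A → Prop
  | fwd {x a y} : (x, a, y) ∈ G.E → Step G x y (FreeGroup.of a)
  | bwd {x a y} : (x, a, y) ∈ G.E → Step G y x (FreeGroup.of a)⁻¹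

inductive PathLabel (G : LDigraph V A) : V → V → FreeGroup A → Prop
  | nil (x) : PathLabel G x x 1
  | cons {x y z g h} : G.Step x y g → PathLabel G y z h → PathLabel G x z (g * h)

inductive PosPath (G : LDigraph V A) : V → V → List A → Prop
  | nil (x) : PosPath G x x []
  | cons {x a y z w} : (x, a, y) ∈ G.E → PosPath G y z w → PosPath G x z (a :: w)

def loopLabels (G : LDigraph V A) (x : V) : Set (FreeGroup A) :=
  {g | G.PathLabel x x g}

def Connected (G : LDigraph V A) : Prop :=
  ∀ x y : V, ∃ g, G.PathLabel x y g

def quot (G : LDigraph V A) (r : Setoid V) : LDigraph (Quotient r) A :=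
  ⟨{e | ∃ x a y, (x, a, y) ∈ G.E ∧ e = (Quotient.mk r x, a, Quotient.mk r y)}⟩

def GroupPreserving (G : LDigraph V A) (r : Setoid V) : Prop :=
  ∀ x : V, G.loopLabels x = (G.quot r).loopLabels (Quotient.mk r x)

end LDigraph

/-- The image of a word in the free group. -/
def wordToFG (w : List A) : FreeGroup A := (w.map FreeGroup.of).prod

def FactorClosed (L : Set (List A)) : Prop := ∀ w ∈ L, ∀ u : List A, u <:+: w → u ∈ L

def Recurrent (L : Set (List A)) : Prop :=
  FactorClosed L ∧ ∀ u ∈ L, ∀ v ∈ L, ∃ w : List A, w ≠ [] ∧ u ++ w ++ v ∈ L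

def UniformlyRecurrent (L : Set (List A)) : Prop :=
  FactorClosed L ∧ ∀ u ∈ L, ∃ N : ℕ, ∀ w ∈ L, N ≤ w.length → u <:+: w

/-- The Rauzy graph `G_{m,k}`: vertices are the words of `L` of length `m`, and every
word `x ∈ L` of length `m+1` gives an edge from `init x` to `tail x` labeled `x(k)`. -/
def rauzy (L : Set (List A)) (m k : ℕ) : LDigraph (List A) A :=
  ⟨{e | ∃ x a, x ∈ L ∧ x.length = m + 1 ∧ x[k]? = some a ∧ e = (x.dropLast, a, x.tail)}⟩

/-- The extension graph `E(w)`, a bipartite graph on two copies of `A`. -/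
def extGraph (L : Set (List A)) (w : List A) : SimpleGraph (A ⊕ A) where
  Adj x y := ∃ a b, a :: (w ++ [b]) ∈ L ∧
    ((x = Sum.inl a ∧ y = Sum.inr b) ∨ (x = Sum.inr b ∧ y = Sum.inl a))
  symm := by constructor; rintro x y ⟨a, b, h, hc⟩; exact ⟨a, b, h, by tauto⟩
  loopless := by
    constructor; rintro x ⟨a, b, h, ⟨h1, h2⟩ | ⟨h1, h2⟩⟩ <;> rw [h1] at h2 <;> exact absurd h2 (by simp)

/-- The set of genuine vertices of the extension graph of `w`. -/
def extVerts (L : Set (List A)) (w : List A) : Set (A ⊕ A) :=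
  Sum.elim (fun a => a :: w ∈ L) (fun b => w ++ [b] ∈ L)

/-- The extension graph of `w` is connected (all genuine vertices are mutually reachable). -/
def ExtConnected (L : Set (List A)) (w : List A) : Prop :=
  ∀ x ∈ extVerts L w, ∀ y ∈ extVerts L w, (extGraph L w).Reachable x y

/-- The extension graph of order `(d,d)` of the word `y`. -/
def extGraphK (L : Set (List A)) (d : ℕ) (y : List A) : SimpleGraph (List A ⊕ List A) where
  Adj p q := ∃ u v : List A, u.length = d ∧ v.length = d ∧ u ++ y ++ v ∈ L ∧
    ((p = Sum.inl u ∧ q = Sum.inr v) ∨ (p = Sum.inr v ∧ q = Sum.inl u))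
  symm := by constructor; rintro p q ⟨u, v, h1, h2, h3, hc⟩; exact ⟨u, v, h1, h2, h3, by tauto⟩
  loopless := by
    constructor; rintro p ⟨u, v, _, _, _, ⟨h1, h2⟩ | ⟨h1, h2⟩⟩ <;> rw [h1] at h2 <;> exact absurd h2 (by simp)

/-- A language is suffix-connected if for every nonempty word `w ∈ L` there exists a depth
`1 ≤ d ≤ |w|+1` such that the natural embedding of the left extensions of `w` in the
extension graph `E_{d,d}(tail^{d-1} w)` lies in a single connected component. -/
def SuffixConnected (L : Set (List A)) : Prop :=
  ∀ w ∈ L, w ≠ [] → ∃ d : ℕ, 1 ≤ d ∧ d ≤ w.length + 1 ∧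
    ∀ a b : A, a :: w ∈ L → b :: w ∈ L →
      (extGraphK L d (w.drop (d - 1))).Reachable
        (Sum.inl (a :: w.take (d - 1))) (Sum.inl (b :: w.take (d - 1)))

open Classical in
/-- The number of occurrences of `u` in `w`. -/
noncomputable def occCount (u w : List A) : ℕ :=
  (List.range (w.length + 1)).countP fun i => decide (u <+: w.drop i)

/-- The return set `R_{u,v}`. -/
noncomputable def ReturnSet (L : Set (List A)) (u v : List A) : Set (List A) :=
  {r | r ∈ L ∧ u ++ r ++ v ∈ L ∧ (u ++ v) <+: (u ++ r ++ v) ∧ (u ++ v) <:+ (u ++ r ++ v) ∧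
    occCount (u ++ v) (u ++ r ++ v) = 2}

end Prelude

private lemma pathLabel_map {V W A : Type*} {G : LDigraph V A} {H : LDigraph W A} (f : V → W)
    (hf : ∀ {x a y}, (x, a, y) ∈ G.E → (f x, a, f y) ∈ H.E) :
    ∀ {x y g}, G.PathLabel x y g → H.PathLabel (f x) (f y) g := by
  intro x y g h
  induction h with
  | nil => exact .nil _
  | cons s _ ih =>
    cases s with
    | fwd he => exact .cons (.fwd (hf he)) ih
    | bwd he => exact .cons (.bwd (hf he)) ih

/-- In a connected labeled digraph, any equivalence relation contained in a group-preserving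
equivalence relation is itself group-preserving. -/
theorem groupPreserving_of_le {V A : Type*} (G : LDigraph V A) (hG : G.Connected)
    (r₁ r₂ : Setoid V) (hsub : ∀ x y : V, r₂.r x y → r₁.r x y)
    (h₁ : G.GroupPreserving r₁) : G.GroupPreserving r₂ := by
  intro x
  apply Set.eq_of_subset_of_subset
  · intro g hg
    refine pathLabel_map (G := G) (H := G.quot r₂) (Quotient.mk r₂) ?_ hg
    intro x a y he
    exact ⟨x, a, y, he, rfl⟩
  · intro g hg
    rw [h₁ x]
    have hlift : ∀ a b : V, r₂.r a b → Quotient.mk r₁ a = Quotient.mk r₁ b :=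
      fun a b h => Quotient.sound (hsub a b h)
    have : (G.quot r₁).PathLabel
        (Quotient.lift (Quotient.mk r₁) hlift (Quotient.mk r₂ x))
        (Quotient.lift (Quotient.mk r₁) hlift (Quotient.mk r₂ x)) g := by
      refine pathLabel_map (Quotient.lift (Quotient.mk r₁) hlift) ?_ hg
      intro p a q h
      obtain ⟨u, b, v, he, heq⟩ := h
      simp only [Prod.mk.injEq] at heq
      obtain ⟨rfl, rfl, rfl⟩ := heq
      exact ⟨u, a, v, he, rfl⟩
    simpa [LDigraph.loopLabels] using this
end

section
/- Let L be a recurrent language on A containing A, with every word of L ∩ A^{m-1} connected (its extension graph is connected), where m ≥ 1. Then for 1 ≤ k ≤ m, the equivalence relation ker(tail) on the vertices of the Rauzy graph G_{m,k} (identifying words of L ∩ A^m with the same tail) is group-preserving. -/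
open List

section Helpers

variable {A V : Type*}

namespace LDigraph

theorem PathLabel.trans {G : LDigraph V A} {x y z : V} {g h : FreeGroup A}
    (p : G.PathLabel x y g) (q : G.PathLabel y z h) : G.PathLabel x z (g * h) := by
  induction p with
  | nil => simpa using q
  | cons s _ ih => rw [mul_assoc]; exact .cons s (ih q)

theorem Step.quot {G : LDigraph V A} (r : Setoid V) {x y : V} {g : FreeGroup A}
    (s : G.Step x y g) : (G.quot r).Step (Quotient.mk r x) (Quotient.mk r y) g := by
  cases s with
  | fwd h => exact .fwd ⟨_, _, _, h, rfl⟩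
  | bwd h => exact .bwd ⟨_, _, _, h, rfl⟩

theorem PathLabel.quot {G : LDigraph V A} (r : Setoid V) {x y : V} {g : FreeGroup A}
    (p : G.PathLabel x y g) :
    (G.quot r).PathLabel (Quotient.mk r x) (Quotient.mk r y) g := by
  induction p with
  | nil => exact .nil _
  | cons s _ ih => exact .cons (s.quot r) ih

end LDigraph

end Helpers

section Key

variable {A : Type*}

/-- In the Rauzy graph `G_{m,k}` (with `1 ≤ k ≤ m`), two words of `L ∩ A^m` with the same
tail are joined by a path of label `1`, provided the extension graph of the tail is
connected. -/
theorem pathLabel_one_of_tail_eq (L : Set (List A)) (hFC : FactorClosed L)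
    (m : ℕ) (hm : 1 ≤ m)
    (hconn : ∀ w ∈ L, w.length = m - 1 → ExtConnected L w)
    (k : ℕ) (hk1 : 1 ≤ k) (hk2 : k ≤ m)
    {x y : List A} (hx : x ∈ L) (hxl : x.length = m) (hy : y ∈ L) (hyl : y.length = m)
    (ht : x.tail = y.tail) : (rauzy L m k).PathLabel x y 1 := by
  obtain ⟨k', rfl⟩ : ∃ k', k = k' + 1 := ⟨k - 1, (Nat.succ_pred_eq_of_pos hk1).symm⟩
  obtain ⟨a, w, rfl⟩ : ∃ a w, x = a :: w := by
    cases x with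
    | nil => simp at hxl; omega
    | cons a w => exact ⟨a, w, rfl⟩
  obtain ⟨b, w', rfl⟩ : ∃ b w', y = b :: w' := by
    cases y with
    | nil => simp at hyl; omega
    | cons b w' => exact ⟨b, w', rfl⟩
  obtain rfl : w = w' := by simpa using ht
  have hwL : w ∈ L := hFC _ hx w ⟨[a], [], by simp⟩
  have hwl : w.length = m - 1 := by simp at hxl; omega
  have hconnw := hconn w hwL hwl
  have hreach : (extGraph L w).Reachable (Sum.inl a) (Sum.inl b) :=
    hconnw (Sum.inl a) hx (Sum.inl b) hy
  obtain ⟨wk⟩ := hreach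
  -- the group label attached to a right extension `d`
  set g : A → FreeGroup A := fun d => ((w ++ [d])[k']?).elim 1 FreeGroup.of with hg
  set ψ : A ⊕ A → FreeGroup A := Sum.elim (fun _ => 1) (fun d => (g d)⁻¹) with hψ
  set f : A ⊕ A → List A := Sum.elim (fun c => c :: w) (fun d => w ++ [d]) with hf
  have hklt : ∀ d : A, k' < (w ++ [d]).length := by
    intro d; simp [hwl]; omega
  have hedge : ∀ c d : A, c :: (w ++ [d]) ∈ L →
      ((c :: w, (w ++ [d]).get ⟨k', hklt d⟩, w ++ [d]) : _ × _ × _) ∈ (rauzy L m (k' + 1)).E := by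
    intro c d hcd
    refine ⟨c :: (w ++ [d]), (w ++ [d]).get ⟨k', hklt d⟩, hcd, by simp [hwl]; omega, ?_, ?_⟩
    · show (c :: (w ++ [d]))[k' + 1]? = _
      exact List.getElem?_cons_succ.trans (List.getElem?_eq_getElem (hklt d))
    · have h1 : (c :: (w ++ [d])).dropLast = c :: w := by
        rw [show c :: (w ++ [d]) = (c :: w) ++ [d] by simp, List.dropLast_concat]
      simp [h1]
  have hgval : ∀ d : A, g d = FreeGroup.of ((w ++ [d]).get ⟨k', hklt d⟩) := by
    intro d
    show ((w ++ [d])[k']?).elim 1 FreeGroup.of = _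
    rw [List.getElem?_eq_getElem (hklt d)]
    rfl
  have main : ∀ {p q : A ⊕ A}, (extGraph L w).Walk p q →
      (rauzy L m (k' + 1)).PathLabel (f p) (f q) (ψ p * (ψ q)⁻¹) := by
    intro p q wk
    induction wk with
    | nil => simpa using LDigraph.PathLabel.nil _
    | @cons p p' q hadj _ ih =>
      obtain ⟨c, d, hcd, hor⟩ := hadj
      rcases hor with ⟨rfl, rfl⟩ | ⟨rfl, rfl⟩
      · have s : (rauzy L m (k' + 1)).Step (f (Sum.inl c)) (f (Sum.inr d)) (g d) := by
          rw [hgval d]; exact .fwd (hedge c d hcd)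
        have := LDigraph.PathLabel.cons s ih
        have heq : g d * (ψ (Sum.inr d) * (ψ q)⁻¹) = ψ (Sum.inl c) * (ψ q)⁻¹ := by
          simp [hψ]
        rwa [heq] at this
      · have s : (rauzy L m (k' + 1)).Step (f (Sum.inr d)) (f (Sum.inl c)) (g d)⁻¹ := by
          rw [hgval d]; exact .bwd (hedge c d hcd)
        have := LDigraph.PathLabel.cons s ih
        have heq : (g d)⁻¹ * (ψ (Sum.inl c) * (ψ q)⁻¹) = ψ (Sum.inr d) * (ψ q)⁻¹ := by
          simp [hψ]
        rwa [heq] at this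
  have := main wk
  simpa [hψ, hf] using this

end Key

/-- If every word of `L` of length `m-1` has a connected extension graph, then for
`1 ≤ k ≤ m`, the relation `ker(tail)` on the vertices of the Rauzy graph `G_{m,k}` is
group-preserving. -/
theorem kerTail_groupPreserving {A : Type*} (L : Set (List A)) (hrec : Recurrent L)
    (hA : ∀ a : A, [a] ∈ L) (m : ℕ) (hm : 1 ≤ m)
    (hconn : ∀ w ∈ L, w.length = m - 1 → ExtConnected L w)
    (k : ℕ) (hk1 : 1 ≤ k) (hk2 : k ≤ m)
    (r : Setoid (List A))
    (hr : ∀ x y : List A, r.r x y ↔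
      (x = y ∨ (x ∈ L ∧ x.length = m ∧ y ∈ L ∧ y.length = m ∧ x.tail = y.tail))) :
    (rauzy L m k).GroupPreserving r := by
  -- lift a path in the quotient back to `G`
  have bridge : ∀ x y : List A, r.r x y → (rauzy L m k).PathLabel x y 1 := by
    intro x y hxy
    rcases (hr x y).mp hxy with rfl | ⟨hx, hxl, hy, hyl, ht⟩
    · exact .nil _
    · exact pathLabel_one_of_tail_eq L hrec.1 m hm hconn k hk1 hk2 hx hxl hy hyl ht
  have lift : ∀ {p q : Quotient r} {h : FreeGroup A},
      ((rauzy L m k).quot r).PathLabel p q h →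
      ∀ x y : List A, p = Quotient.mk r x → q = Quotient.mk r y →
        (rauzy L m k).PathLabel x y h := by
    intro p q h hp
    induction hp with
    | nil z =>
      intro x y hx hy
      have : r.r x y := Quotient.exact (hx.symm.trans hy)
      simpa using bridge x y this
    | @cons p p' q gs hs s _ ih =>
      intro x y hx hy
      cases s with
      | fwd he =>
        obtain ⟨x₁, a, y₁, hE, heq⟩ := he
        obtain ⟨h1, h2, h3⟩ : p = Quotient.mk r x₁ ∧ _ ∧ p' = Quotient.mk r y₁ := by
          refine ⟨congrArg Prod.fst heq, congrArg (Prod.fst ∘ Prod.snd) heq,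
            congrArg (Prod.snd ∘ Prod.snd) heq⟩
        subst h2
        have hxr : r.r x x₁ := Quotient.exact (hx.symm.trans h1)
        have p1 := bridge x x₁ hxr
        have p2 := LDigraph.PathLabel.cons (LDigraph.Step.fwd hE) (ih y₁ y h3 hy)
        simpa using p1.trans p2
      | bwd he =>
        obtain ⟨x₁, a, y₁, hE, heq⟩ := he
        obtain ⟨h1, h2, h3⟩ : p' = Quotient.mk r x₁ ∧ _ ∧ p = Quotient.mk r y₁ := by
          refine ⟨congrArg Prod.fst heq, congrArg (Prod.fst ∘ Prod.snd) heq,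
            congrArg (Prod.snd ∘ Prod.snd) heq⟩
        subst h2
        have hxr : r.r x y₁ := Quotient.exact (hx.symm.trans h3)
        have p1 := bridge x y₁ hxr
        have p2 := LDigraph.PathLabel.cons (LDigraph.Step.bwd hE) (ih x₁ y h1 hy)
        simpa using p1.trans p2
  intro x
  ext gl
  constructor
  · intro hgl
    exact hgl.quot r
  · intro hgl
    exact lift hgl x x rfl rfl
end

section
/- Let φ be the substitution 0 ↦ 0001, 1 ↦ 02, 2 ↦ 001 on A = {0,1,2}, and define x_k = init(φ^k(2)). Then for all k: x_{k+1} = φ(x_k)00 if k is even and x_{k+1} = φ(x_k)0 if k is odd; moreover x_k·0 is a prefix of φ^k(0). -/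
/-- The substitution `0 ↦ 0001, 1 ↦ 02, 2 ↦ 001` on the alphabet `{0,1,2}`. -/
def phiSub : Fin 3 → List (Fin 3) := ![[0, 0, 0, 1], [0, 2], [0, 0, 1]]

/-- The substitution extended to words. -/
def phi (w : List (Fin 3)) : List (Fin 3) := w.flatMap phiSub

/-- `x_k = init (φ^k(2))`. -/
def xk (k : ℕ) : List (Fin 3) := (phi^[k] [2]).dropLast

lemma phi_append (a b : List (Fin 3)) : phi (a ++ b) = phi a ++ phi b := by
  simp [phi]

lemma key (k : ℕ) : phi^[k] [2] = xk k ++ [if Even k then 2 else 1] := by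
  induction k with
  | zero => simp [xk, phi]
  | succ k ih =>
    have h1 : phi^[k+1] [2] = phi (phi^[k] [2]) := Function.iterate_succ_apply' _ _ _
    have h2 : xk (k+1) = (phi (phi^[k] [2])).dropLast := by rw [xk, h1]
    by_cases hk : Even k
    · rw [h1, ih, phi_append, h2, ih, phi_append]
      simp [hk, Nat.even_add_one, phi, phiSub]
    · rw [h1, ih, phi_append, h2, ih, phi_append]
      simp [hk, Nat.even_add_one, phi, phiSub]

lemma xk_succ (k : ℕ) :
    xk (k+1) = phi (xk k) ++ (if Even k then [0,0] else [0]) := by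
  have h1 : phi^[k+1] [2] = phi (phi^[k] [2]) := Function.iterate_succ_apply' _ _ _
  have h2 : xk (k+1) = (phi (phi^[k] [2])).dropLast := by rw [xk, h1]
  rw [h2, key k, phi_append]
  by_cases hk : Even k <;> simp [hk, phi, phiSub]

/-- For all `k`: `x_{k+1} = φ(x_k)00` if `k` is even, `x_{k+1} = φ(x_k)0` if `k` is odd;
moreover `x_k·0` is a prefix of `φ^k(0)`. -/
theorem xk_rec_and_prefix (k : ℕ) :
    ((Even k → xk (k + 1) = phi (xk k) ++ [0, 0]) ∧
      (Odd k → xk (k + 1) = phi (xk k) ++ [0])) ∧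
    (xk k ++ [0]) <+: phi^[k] [0] := by
  refine ⟨⟨fun hk => by simp [xk_succ, hk], fun hk => by
    simp [xk_succ, Nat.not_even_iff_odd.2 hk]⟩, ?_⟩
  induction k with
  | zero => simp [xk, phi]
  | succ k ih =>
    obtain ⟨t, ht⟩ := ih
    have h1 : phi^[k+1] [0] = phi (phi^[k] [0]) := Function.iterate_succ_apply' _ _ _
    rw [h1, ← ht, phi_append, phi_append, xk_succ]
    by_cases hk : Even k
    · simp [hk, phi, phiSub]
    · simp [hk, phi, phiSub]
end

section
/- Let L be the language of factors of the primitive substitution φ: 0 ↦ 0001, 1 ↦ 02, 2 ↦ 001. Every right special factor of L of length at least 2 either ends with 00 and has right extensions exactly {0,1}, or ends with 10 and has right extensions exactly {0,2}; dually, every left special factor of length at least 3 either starts with 000 and has left extensions exactly {1,2}, or starts with 001 and has left extensions exactly {0,1}. -/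
/-- The language of the substitution: nonempty factors of the words `φ^n(a)`. -/
def Lphi : Set (List (Fin 3)) :=
  {w | w ≠ [] ∧ ∃ (n : ℕ) (a : Fin 3), w <:+: phi^[n] [a]}

/-- All factors of length ≤ 4 of the language. -/
def Aset : List (List (Fin 3)) :=
  [[0],[1],[2],[0,0],[0,1],[0,2],[1,0],[2,0],
   [0,0,0],[0,0,1],[0,1,0],[0,2,0],[1,0,0],[1,0,2],[2,0,0],
   [0,0,0,1],[0,0,1,0],[0,1,0,0],[0,1,0,2],[0,2,0,0],[1,0,0,0],[1,0,0,1],[1,0,2,0],[2,0,0,0]]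

lemma phiSub_ne_nil (a : Fin 3) : phiSub a ≠ [] := by
  fin_cases a <;> simp [phiSub]

/-- A nonempty prefix of `w.flatMap f` is a prefix of `u.flatMap f` for some
nonempty prefix `u` of `w` with `|u| ≤ |v|`. -/
lemma prefix_flatMap {α β : Type*} (f : α → List β) (hf : ∀ a, f a ≠ []) :
    ∀ (w : List α) (v : List β), v <+: w.flatMap f → v ≠ [] →
      ∃ u, u <+: w ∧ u ≠ [] ∧ u.length ≤ v.length ∧ v <+: u.flatMap f
  | [], v, hv, hne => by
      simp only [List.flatMap_nil, List.prefix_nil] at hv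
      exact absurd hv hne
  | a :: w, v, hv, hne => by
      rw [List.flatMap_cons] at hv
      have h1 : 1 ≤ v.length := List.length_pos_iff.mpr hne
      by_cases h : v.length ≤ (f a).length
      · refine ⟨[a], ⟨w, rfl⟩, by simp, by simpa using h1, ?_⟩
        have hva : v <+: f a :=
          List.prefix_of_prefix_length_le hv ((f a).prefix_append _) h
        simpa using hva
      · push_neg at h
        have hfa : f a <+: v :=
          List.prefix_of_prefix_length_le ((f a).prefix_append _) hv h.le
        obtain ⟨v', rfl⟩ := hfa
        have hv' : v' <+: w.flatMap f := by
          obtain ⟨t, ht⟩ := hv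
          rw [List.append_assoc] at ht
          exact ⟨t, List.append_cancel_left ht⟩
        by_cases hv'e : v' = []
        · subst hv'e
          refine ⟨[a], ⟨w, rfl⟩, by simp, ?_, ?_⟩
          · simpa [Nat.one_le_iff_ne_zero, Nat.pos_iff_ne_zero] using List.length_pos_iff.mpr (hf a)
          · simp
        · obtain ⟨u, hu, hune, hulen, hvu⟩ := prefix_flatMap f hf w v' hv' hv'e
          obtain ⟨r, hr⟩ := hu
          refine ⟨a :: u, ⟨r, by simp [hr]⟩, by simp, ?_, ?_⟩
          · have hfa1 : 1 ≤ (f a).length := List.length_pos_iff.mpr (hf a)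
            simp only [List.length_cons, List.length_append]
            omega
          · rw [List.flatMap_cons]
            obtain ⟨q, hq⟩ := hvu
            exact ⟨q, by rw [List.append_assoc, hq]⟩

/-- A nonempty infix of `w.flatMap f` is an infix of `u.flatMap f` for some
nonempty infix `u` of `w` with `|u| ≤ |v|`. -/
lemma infix_flatMap {α β : Type*} (f : α → List β) (hf : ∀ a, f a ≠ []) :
    ∀ (w : List α) (v : List β), v <:+: w.flatMap f → v ≠ [] →
      ∃ u, u <:+: w ∧ u ≠ [] ∧ u.length ≤ v.length ∧ v <:+: u.flatMap f
  | [], v, hv, hne => by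
      simp only [List.flatMap_nil, List.infix_nil] at hv
      exact absurd hv hne
  | a :: w, v, hv, hne => by
      rw [List.flatMap_cons] at hv
      obtain ⟨s, t, hst⟩ := hv
      have h1 : 1 ≤ v.length := List.length_pos_iff.mpr hne
      have hsv : s ++ v <+: f a ++ w.flatMap f := ⟨t, by rw [← hst, List.append_assoc]⟩
      by_cases hA : s.length + v.length ≤ (f a).length
      · -- v lies inside f a
        have hsva : s ++ v <+: f a :=
          List.prefix_of_prefix_length_le hsv ((f a).prefix_append _) (by simpa using hA)
        obtain ⟨q, hq⟩ := hsva
        refine ⟨[a], ⟨[], w, rfl⟩, by simp, by simpa using h1, ?_⟩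
        simp only [List.flatMap_cons, List.flatMap_nil, List.append_nil]
        exact ⟨s, q, by rw [← hq, List.append_assoc]⟩
      · by_cases hB : (f a).length ≤ s.length
        · -- v lies inside flatMap w
          have hfs : f a <+: s :=
            List.prefix_of_prefix_length_le ((f a).prefix_append _)
              ⟨v ++ t, by rw [← hst]; simp⟩ hB
          obtain ⟨s', rfl⟩ := hfs
          have hrest : s' ++ v ++ t = w.flatMap f := by
            have h2 : f a ++ (s' ++ v ++ t) = f a ++ w.flatMap f := by
              simpa [List.append_assoc] using hst
            exact List.append_cancel_left h2
          obtain ⟨u, hu, hune, hulen, hvu⟩ :=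
            infix_flatMap f hf w v ⟨s', t, hrest⟩ hne
          exact ⟨u, hu.trans (List.infix_cons (List.infix_refl w)), hune, hulen, hvu⟩
        · -- v straddles
          push_neg at hA hB
          have hsfa : s <+: f a :=
            List.prefix_of_prefix_length_le ⟨v ++ t, by rw [← hst]; simp⟩
              ((f a).prefix_append _) hB.le
          obtain ⟨v1, hv1⟩ := hsfa   -- s ++ v1 = f a
          have hfsv : f a <+: s ++ v :=
            List.prefix_of_prefix_length_le ((f a).prefix_append _) hsv (by simp only [List.length_append]; omega)
          have hv1v : v1 <+: v := by
            rw [← hv1] at hfsv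
            exact (List.prefix_append_right_inj s).mp hfsv
          obtain ⟨v2, rfl⟩ := hv1v   -- v = v1 ++ v2
          have hv1ne : v1 ≠ [] := by
            intro h
            have := congrArg List.length hv1
            simp [h] at this
            omega
          have hv2 : v2 ++ t = w.flatMap f := by
            have h2 : (s ++ v1) ++ (v2 ++ t) = f a ++ w.flatMap f := by
              simpa [List.append_assoc] using hst
            rw [hv1] at h2
            exact List.append_cancel_left h2
          by_cases hv2e : v2 = []
          · subst hv2e
            refine ⟨[a], ⟨[], w, rfl⟩, by simp, by simpa using h1, ?_⟩
            simp only [List.flatMap_cons, List.flatMap_nil]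
            exact ⟨s, [], by simp [hv1]⟩
          · obtain ⟨u2, hu2, hu2ne, hu2len, hvu2⟩ :=
              prefix_flatMap f hf w v2 ⟨t, hv2⟩ hv2e
            obtain ⟨r, hr⟩ := hu2
            refine ⟨a :: u2, List.IsPrefix.isInfix ⟨r, by simp [hr]⟩, by simp, ?_, ?_⟩
            · have hv11 : 1 ≤ v1.length := List.length_pos_iff.mpr hv1ne
              simp only [List.length_cons, List.length_append]
              omega
            · rw [List.flatMap_cons]
              obtain ⟨q, hq⟩ := hvu2
              exact ⟨s, q, by rw [← hv1, ← hq]; simp⟩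

lemma Lphi_infix {v w : List (Fin 3)} (hw : w ∈ Lphi) (hv : v <:+: w) (hne : v ≠ []) :
    v ∈ Lphi := by
  obtain ⟨-, n, a, h⟩ := hw
  exact ⟨hne, n, a, hv.trans h⟩

lemma Aset_sub_Lphi : ∀ v ∈ Aset, v ∈ Lphi := by
  have h : ∀ v ∈ Aset, v ≠ [] ∧ v <:+: phi^[4] [0] := by decide
  intro v hv
  exact ⟨(h v hv).1, 4, 0, (h v hv).2⟩

lemma Aset_closed : ∀ u ∈ Aset, ∀ t ∈ (phi u).tails, ∀ k ∈ [1, 2, 3, 4],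
    t.take k = [] ∨ t.take k ∈ Aset := by decide

lemma mem_Aset_step (w : List (Fin 3))
    (hw : ∀ v, v <:+: w → v ≠ [] → v.length ≤ 4 → v ∈ Aset) :
    ∀ v, v <:+: phi w → v ≠ [] → v.length ≤ 4 → v ∈ Aset := by
  intro v hv hne hlen
  obtain ⟨u, huw, hune, hul, hvu⟩ := infix_flatMap phiSub phiSub_ne_nil w v hv hne
  have hu : u ∈ Aset := hw u huw hune (hul.trans hlen)
  obtain ⟨t, hvt, hts⟩ := List.infix_iff_prefix_suffix.mp hvu
  have hvtake : t.take v.length = v := (List.prefix_iff_eq_take.mp hvt).symm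
  have hk : v.length ∈ [1, 2, 3, 4] := by
    have h1 : 1 ≤ v.length := List.length_pos_iff.mpr hne
    simp only [List.mem_cons, List.not_mem_nil, or_false]
    omega
  have hres := Aset_closed u hu t ((List.mem_tails _ _).mpr hts) v.length hk
  rw [hvtake] at hres
  exact hres.resolve_left hne

lemma mem_Aset_of_small : ∀ v ∈ Lphi, v.length ≤ 4 → v ∈ Aset := by
  have key : ∀ (n : ℕ) (a : Fin 3) (v : List (Fin 3)),
      v <:+: phi^[n] [a] → v ≠ [] → v.length ≤ 4 → v ∈ Aset := by
    intro n
    induction n with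
    | zero =>
        intro a v hv hne _
        have h1 := List.length_pos_iff.mpr hne
        have h2 := hv.length_le
        simp only [Function.iterate_zero, id_eq, List.length_cons, List.length_nil] at h2
        have hv1 : v = [a] := hv.sublist.eq_of_length (by simp; omega)
        subst hv1
        fin_cases a <;> decide
    | succ n ih =>
        intro a v hv hne hl
        rw [Function.iterate_succ_apply'] at hv
        exact mem_Aset_step _ (fun u hu hun hul => ih a u hu hun hul) v hv hne hl
  intro v hv hlen
  obtain ⟨hne, n, a, h⟩ := hv
  exact key n a v h hne hlen

lemma right_classify : ∀ u ∈ Aset, u.length = 2 → ∀ b c : Fin 3, b ≠ c →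
    u ++ [b] ∈ Aset → u ++ [c] ∈ Aset → u = [0, 0] ∨ u = [1, 0] := by decide

lemma right_ext00 : ∀ d : Fin 3, [0, 0] ++ [d] ∈ Aset ↔ (d = 0 ∨ d = 1) := by decide

lemma right_ext10 : ∀ d : Fin 3, [1, 0] ++ [d] ∈ Aset ↔ (d = 0 ∨ d = 2) := by decide

lemma left_classify : ∀ u ∈ Aset, u.length = 3 → ∀ b c : Fin 3, b ≠ c →
    b :: u ∈ Aset → c :: u ∈ Aset → u = [0, 0, 0] ∨ u = [0, 0, 1] := by decide

lemma left_ext000 : ∀ d : Fin 3, d :: [0, 0, 0] ∈ Aset ↔ (d = 1 ∨ d = 2) := by decide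

lemma left_ext001 : ∀ d : Fin 3, d :: [0, 0, 1] ∈ Aset ↔ (d = 0 ∨ d = 1) := by decide

/-- Every right special factor of length ≥ 2 of the language of
`0 ↦ 0001, 1 ↦ 02, 2 ↦ 001` either ends with `00` and has right extensions `{0,1}`,
or ends with `10` and has right extensions `{0,2}`; dually, every left special factor of
length ≥ 3 either starts with `000` and has left extensions `{1,2}`, or starts with `001`
and has left extensions `{0,1}`. -/
theorem special_factors_classification :
    (∀ w ∈ Lphi, 2 ≤ w.length →
      (∃ b c : Fin 3, b ≠ c ∧ w ++ [b] ∈ Lphi ∧ w ++ [c] ∈ Lphi) →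
      (([0, 0] <:+ w ∧ {b : Fin 3 | w ++ [b] ∈ Lphi} = {0, 1}) ∨
        ([1, 0] <:+ w ∧ {b : Fin 3 | w ++ [b] ∈ Lphi} = {0, 2}))) ∧
    (∀ w ∈ Lphi, 3 ≤ w.length →
      (∃ b c : Fin 3, b ≠ c ∧ b :: w ∈ Lphi ∧ c :: w ∈ Lphi) →
      (([0, 0, 0] <+: w ∧ {a : Fin 3 | a :: w ∈ Lphi} = {1, 2}) ∨
        ([0, 0, 1] <+: w ∧ {a : Fin 3 | a :: w ∈ Lphi} = {0, 1}))) := by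
  constructor
  · rintro w hw hlen ⟨b, c, hbc, hb, hc⟩
    set u := w.drop (w.length - 2) with hu_def
    have hus : u <:+ w := List.drop_suffix _ _
    have hul : u.length = 2 := by
      rw [hu_def, List.length_drop]; omega
    obtain ⟨p, hp⟩ := id hus
    have hext : ∀ d : Fin 3, w ++ [d] ∈ Lphi → u ++ [d] ∈ Aset := by
      intro d hd
      refine mem_Aset_of_small _ (Lphi_infix hd ⟨p, [], ?_⟩ (by simp)) (by simp [hul])
      rw [← hp]; simp
    have hu_mem : u ∈ Aset := by
      refine mem_Aset_of_small _ (Lphi_infix hw hus.isInfix ?_) (by omega)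
      intro h; rw [h] at hul; simp at hul
    rcases right_classify u hu_mem hul b c hbc (hext b hb) (hext c hc) with h00 | h10
    · left
      rw [h00] at hus
      refine ⟨hus, ?_⟩
      have hbA := hext b hb; rw [h00] at hbA
      have hcA := hext c hc; rw [h00] at hcA
      have hb' := (right_ext00 b).mp hbA
      have hc' := (right_ext00 c).mp hcA
      ext d
      simp only [Set.mem_setOf_eq, Set.mem_insert_iff, Set.mem_singleton_iff]
      constructor
      · intro hd
        have hdA := hext d hd; rw [h00] at hdA
        exact (right_ext00 d).mp hdA
      · rintro (rfl | rfl) <;> rcases hb' with rfl | rfl <;> rcases hc' with rfl | rfl <;>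
          first | exact hb | exact hc | exact absurd rfl hbc
    · right
      rw [h10] at hus
      refine ⟨hus, ?_⟩
      have hbA := hext b hb; rw [h10] at hbA
      have hcA := hext c hc; rw [h10] at hcA
      have hb' := (right_ext10 b).mp hbA
      have hc' := (right_ext10 c).mp hcA
      ext d
      simp only [Set.mem_setOf_eq, Set.mem_insert_iff, Set.mem_singleton_iff]
      constructor
      · intro hd
        have hdA := hext d hd; rw [h10] at hdA
        exact (right_ext10 d).mp hdA
      · rintro (rfl | rfl) <;> rcases hb' with rfl | rfl <;> rcases hc' with rfl | rfl <;>
          first | exact hb | exact hc | exact absurd rfl hbc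
  · rintro w hw hlen ⟨b, c, hbc, hb, hc⟩
    set u := w.take 3 with hu_def
    have hup : u <+: w := List.take_prefix _ _
    have hul : u.length = 3 := by
      rw [hu_def, List.length_take]; omega
    obtain ⟨p, hp⟩ := hup
    have hext : ∀ d : Fin 3, d :: w ∈ Lphi → d :: u ∈ Aset := by
      intro d hd
      refine mem_Aset_of_small _ (Lphi_infix hd ⟨[], p, ?_⟩ (by simp)) (by simp [hul])
      rw [← hp]; simp
    have hu_mem : u ∈ Aset := by
      refine mem_Aset_of_small _ (Lphi_infix hw (List.take_prefix _ _).isInfix ?_) (by omega)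
      intro h; rw [h] at hul; simp at hul
    rcases left_classify u hu_mem hul b c hbc (hext b hb) (hext c hc) with h0 | h1
    · left
      have hup' : [0, 0, 0] <+: w := by rw [← h0]; exact ⟨p, hp⟩
      refine ⟨hup', ?_⟩
      have hbA := hext b hb; rw [h0] at hbA
      have hcA := hext c hc; rw [h0] at hcA
      have hb' := (left_ext000 b).mp hbA
      have hc' := (left_ext000 c).mp hcA
      ext d
      simp only [Set.mem_setOf_eq, Set.mem_insert_iff, Set.mem_singleton_iff]
      constructor
      · intro hd
        have hdA := hext d hd; rw [h0] at hdA
        exact (left_ext000 d).mp hdA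
      · rintro (rfl | rfl) <;> rcases hb' with rfl | rfl <;> rcases hc' with rfl | rfl <;>
          first | exact hb | exact hc | exact absurd rfl hbc
    · right
      have hup' : [0, 0, 1] <+: w := by rw [← h1]; exact ⟨p, hp⟩
      refine ⟨hup', ?_⟩
      have hbA := hext b hb; rw [h1] at hbA
      have hcA := hext c hc; rw [h1] at hcA
      have hb' := (left_ext001 b).mp hbA
      have hc' := (left_ext001 c).mp hcA
      ext d
      simp only [Set.mem_setOf_eq, Set.mem_insert_iff, Set.mem_singleton_iff]
      constructor
      · intro hd
        have hdA := hext d hd; rw [h1] at hdA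
        exact (left_ext001 d).mp hdA
      · rintro (rfl | rfl) <;> rcases hb' with rfl | rfl <;> rcases hc' with rfl | rfl <;>
          first | exact hb | exact hc | exact absurd rfl hbc
end
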